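/- Let κ be an infinite cardinal and let A be a subset of κ. Then the collection 𝒞_A = {∅, κ} ∪ {A − α : α < κ} ∪ {A ∪ α : α < κ} is a maximal chain in 𝒫(κ) containing A. -/

import Mathlib

/-- The collection 𝒞_A = {∅, κ} ∪ {A − α : α < κ} ∪ {A ∪ α : α < κ}, where the
infinite cardinal κ is identified with the set of ordinals below it,
A − α = A \ {β : β < α} and A ∪ α = A ∪ {β : β < α}. -/
def cutsetChain (κ : Cardinal.{u}) (A : Set {β : Ordinal.{u} // β < κ.ord}) :
    Set (Set {β : Ordinal.{u} // β < κ.ord}) :=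
  {∅, Set.univ} ∪
    {S | ∃ α < κ.ord, S = A \ {x | x.1 < α}} ∪
    {S | ∃ α < κ.ord, S = A ∪ {x | x.1 < α}}

lemma cutsetChain_cases {κ : Cardinal.{u}} {A S : Set {β : Ordinal.{u} // β < κ.ord}}
    (h : S ∈ cutsetChain κ A) :
    S = ∅ ∨ S = Set.univ ∨ (∃ α, S = A \ {x | x.1 < α}) ∨ (∃ α, S = A ∪ {x | x.1 < α}) := by
  rcases h with (h | h) | h
  · rcases h with h | h
    · exact Or.inl h
    · exact Or.inr (Or.inl h)
  · obtain ⟨α, _, rfl⟩ := h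
    exact Or.inr (Or.inr (Or.inl ⟨α, rfl⟩))
  · obtain ⟨α, _, rfl⟩ := h
    exact Or.inr (Or.inr (Or.inr ⟨α, rfl⟩))

lemma cutsetChain_isChain (κ : Cardinal.{u}) (A : Set {β : Ordinal.{u} // β < κ.ord}) :
    IsChain (· ⊆ ·) (cutsetChain κ A) := by
  intro S hS T hT _
  rcases cutsetChain_cases hS with rfl | rfl | ⟨α, rfl⟩ | ⟨α, rfl⟩ <;>
    rcases cutsetChain_cases hT with rfl | rfl | ⟨β, rfl⟩ | ⟨β, rfl⟩ <;>
    simp only [Set.empty_subset, Set.subset_univ, true_or, or_true]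
  · rcases le_total α β with h | h
    · exact Or.inr (Set.diff_subset_diff_right fun x hx => lt_of_lt_of_le hx h)
    · exact Or.inl (Set.diff_subset_diff_right fun x hx => lt_of_lt_of_le hx h)
  · exact Or.inl (Set.diff_subset.trans Set.subset_union_left)
  · exact Or.inr (Set.diff_subset.trans Set.subset_union_left)
  · rcases le_total α β with h | h
    · exact Or.inl (Set.union_subset_union_right _ fun x hx => lt_of_lt_of_le hx h)
    · exact Or.inr (Set.union_subset_union_right _ fun x hx => lt_of_lt_of_le hx h)

/-- Let κ be an infinite cardinal and let A be a subset of κ. Then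
𝒞_A = {∅, κ} ∪ {A − α : α < κ} ∪ {A ∪ α : α < κ} is a maximal chain in 𝒫(κ)
containing A. -/
theorem cutsetChain_isMaxChain (κ : Cardinal.{u}) (hκ : Cardinal.aleph0 ≤ κ)
    (A : Set {β : Ordinal.{u} // β < κ.ord}) :
    IsMaxChain (· ⊆ ·) (cutsetChain κ A) ∧ A ∈ cutsetChain κ A := by
  have hord : Order.IsSuccLimit κ.ord := Cardinal.isSuccLimit_ord hκ
  have h0 : (0 : Ordinal.{u}) < κ.ord := hord.pos
  have hsucc : ∀ x : {β : Ordinal.{u} // β < κ.ord}, x.1 + 1 < κ.ord := fun x => by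
    rw [Ordinal.add_one_eq_succ]; exact hord.succ_lt x.2
  have hA0 : A = A \ {x : {β : Ordinal.{u} // β < κ.ord} | x.1 < 0} := by
    ext x; simp [not_lt_zero]
  have hmemA : A ∈ cutsetChain κ A := Or.inl (Or.inr ⟨0, h0, hA0⟩)
  refine ⟨⟨cutsetChain_isChain κ A, ?_⟩, hmemA⟩
  intro t ht hsub
  refine Set.Subset.antisymm hsub fun S hS => ?_
  have comp : ∀ c ∈ cutsetChain κ A, S ⊆ c ∨ c ⊆ S := by
    intro c hc
    rcases eq_or_ne S c with rfl | hne
    · exact Or.inl subset_rfl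
    · exact ht hS (hsub hc) hne
  have hcompA : S ⊆ A ∨ A ⊆ S := by
    have := comp A hmemA
    exact this
  -- membership helpers
  have memD : ∀ α < κ.ord, (A \ {x | x.1 < α}) ∈ cutsetChain κ A :=
    fun α hα => Or.inl (Or.inr ⟨α, hα, rfl⟩)
  have memU : ∀ α < κ.ord, (A ∪ {x | x.1 < α}) ∈ cutsetChain κ A :=
    fun α hα => Or.inr ⟨α, hα, rfl⟩
  rcases hcompA with hSA | hAS
  · -- S ⊆ A : compare with A \ α
    set P : Set Ordinal.{u} := {γ | γ < κ.ord ∧ ¬ S ⊆ A \ {x | x.1 < γ}} with hP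
    rcases Set.eq_empty_or_nonempty P with hPe | hPn
    · -- S = ∅
      have : S = ∅ := by
        by_contra h
        obtain ⟨x, hx⟩ := Set.nonempty_iff_ne_empty.2 h
        have h1 : (x.1 + 1) ∉ P := by rw [hPe]; exact Set.notMem_empty _
        have h2 : S ⊆ A \ {y | y.1 < x.1 + 1} := by
          by_contra h2
          exact h1 ⟨hsucc x, h2⟩
        have := h2 hx
        exact this.2 (lt_of_lt_of_le (lt_add_one x.1) le_rfl)
      rw [this]; exact Or.inl (Or.inl (Or.inl rfl))
    · set β := Ordinal.lt_wf.min P hPn with hβ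
      obtain ⟨hβκ, hβS⟩ : β < κ.ord ∧ ¬ S ⊆ A \ {x | x.1 < β} := Ordinal.lt_wf.min_mem P hPn
      have hmin : ∀ γ < β, S ⊆ A \ {x | x.1 < γ} := by
        intro γ hγ
        by_contra h
        exact Ordinal.lt_wf.not_lt_min P ⟨hγ.trans hβκ, h⟩ hγ
      have hDS : A \ {x | x.1 < β} ⊆ S := (comp _ (memD β hβκ)).resolve_left hβS
      have hkey : ∀ x ∈ S, β ≤ x.1 + 1 := by
        intro x hx
        by_contra h
        push_neg at h
        have := (hmin _ h hx).2
        exact this (lt_add_one x.1)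
      by_cases hall : ∀ x ∈ S, β ≤ x.1
      · -- S = A \ β
        have : S = A \ {x | x.1 < β} :=
          Set.Subset.antisymm (fun x hx => ⟨hSA hx, not_lt.2 (hall x hx)⟩) hDS
        rw [this]; exact memD β hβκ
      · push_neg at hall
        obtain ⟨x, hxS, hxβ⟩ := hall
        have hβx : β = x.1 + 1 := le_antisymm (hkey x hxS) (by
          rw [Ordinal.add_one_eq_succ, Order.succ_le_iff]; exact hxβ)
        have : S = A \ {y | y.1 < x.1} := by
          refine Set.Subset.antisymm (hmin _ hxβ) fun y hy => ?_
          rcases eq_or_lt_of_le (not_lt.1 (show ¬ y.1 < x.1 from hy.2)) with h | h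
          · have : y = x := Subtype.ext h.symm
            rw [this]; exact hxS
          · refine hDS ⟨hy.1, ?_⟩
            simp only [Set.mem_setOf_eq, not_lt, hβx, Ordinal.add_one_eq_succ,
              Order.succ_le_iff]
            exact h
        rw [this]; exact memD x.1 (hxβ.trans hβκ)
  · -- A ⊆ S : compare with A ∪ α
    set P : Set Ordinal.{u} := {γ | γ < κ.ord ∧ S ⊆ A ∪ {x | x.1 < γ}} with hP
    rcases Set.eq_empty_or_nonempty P with hPe | hPn
    · -- S = univ
      have : S = Set.univ := by
        ext x
        simp only [Set.mem_univ, iff_true]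
        have h1 : (x.1 + 1) ∉ P := by rw [hPe]; exact Set.notMem_empty _
        have h2 : ¬ S ⊆ A ∪ {y | y.1 < x.1 + 1} := fun h => h1 ⟨hsucc x, h⟩
        have h3 : A ∪ {y | y.1 < x.1 + 1} ⊆ S := (comp _ (memU _ (hsucc x))).resolve_left h2
        exact h3 (Or.inr (lt_add_one x.1))
      rw [this]; exact Or.inl (Or.inl (Or.inr rfl))
    · set β := Ordinal.lt_wf.min P hPn with hβ
      obtain ⟨hβκ, hβS⟩ : β < κ.ord ∧ S ⊆ A ∪ {x | x.1 < β} := Ordinal.lt_wf.min_mem P hPn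
      have hmin : ∀ γ < β, A ∪ {x | x.1 < γ} ⊆ S := by
        intro γ hγ
        have hγκ : γ < κ.ord := hγ.trans hβκ
        have hns : ¬ S ⊆ A ∪ {x | x.1 < γ} := fun h =>
          Ordinal.lt_wf.not_lt_min P ⟨hγκ, h⟩ hγ
        exact (comp _ (memU γ hγκ)).resolve_left hns
      have : S = A ∪ {x | x.1 < β} := by
        refine Set.Subset.antisymm hβS fun x hx => ?_
        rcases hx with hx | hx
        · exact hAS hx
        · -- x.1 < β
          rcases lt_or_eq_of_le (show x.1 + 1 ≤ β by
            rw [Ordinal.add_one_eq_succ, Order.succ_le_iff]; exact hx) with h | h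
          · exact hmin _ h (Or.inr (lt_add_one x.1))
          · -- β = x.1 + 1
            have hns : ¬ S ⊆ A ∪ {y | y.1 < x.1} := by
              intro hc
              exact Ordinal.lt_wf.not_lt_min P ⟨hx.trans hβκ, hc⟩ hx
            obtain ⟨y, hyS, hyn⟩ := Set.not_subset.1 hns
            simp only [Set.mem_union, Set.mem_setOf_eq, not_or, not_lt] at hyn
            have hyβ := hβS hyS
            rcases hyβ with hy | hy
            · exact absurd hy hyn.1
            · have : y.1 < x.1 + 1 := by rw [h]; exact hy
              have hyx : y = x := Subtype.ext (le_antisymm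
                (by rwa [Ordinal.add_one_eq_succ, Order.lt_succ_iff] at this) hyn.2)
              rw [← hyx]; exact hyS
      rw [this]; exact memU β hβκ
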